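/- Let 1 < λ < λ*, where λ* = (√2+1)·e^{√2}. Then ζ_λ has exactly one nonzero real fixed point, and this fixed point lies in the open interval (0, √2). -/

import Mathlib

/-- The real function `ζ_λ(x) = λ·x·e^{−x}/(x+1)`. -/
noncomputable def zeta (lam x : ℝ) : ℝ := lam * x * Real.exp (-x) / (x + 1)

noncomputable def gAux (x : ℝ) : ℝ := (x + 1) * Real.exp x

lemma gAux_strictMono : StrictMonoOn gAux (Set.Ici (-1 : ℝ)) := by
  apply strictMonoOn_of_deriv_pos (convex_Ici _)
  · exact ((continuous_id.add continuous_const).mul Real.continuous_exp).continuousOn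
  · intro x hx
    rw [interior_Ici] at hx
    have hd : HasDerivAt gAux ((x + 2) * Real.exp x) x := by
      have h1 : HasDerivAt (fun x : ℝ => x + 1) 1 x := (hasDerivAt_id x).add_const 1
      have : HasDerivAt gAux (1 * Real.exp x + (x + 1) * Real.exp x) x := h1.mul (Real.hasDerivAt_exp x)
      convert this using 1
      ring
    rw [hd.deriv]
    have h2 : (0:ℝ) < x + 2 := by linarith [Set.mem_Ioi.mp hx]
    positivity

lemma fixed_iff (lam x : ℝ) (hx0 : x ≠ 0) (hx1 : x ≠ -1) (h : zeta lam x = x) :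
    gAux x = lam := by
  have hx1' : x + 1 ≠ 0 := by intro h'; apply hx1; linarith
  have h1 : lam * x * Real.exp (-x) = x * (x + 1) := by
    rw [zeta, div_eq_iff hx1'] at h
    linarith [h]
  have h2 : lam * Real.exp (-x) = x + 1 := by
    have := mul_left_cancel₀ hx0 (by linarith [h1] : x * (lam * Real.exp (-x)) = x * (x + 1))
    exact this
  have h3 : Real.exp (-x) * Real.exp x = 1 := by
    rw [← Real.exp_add]; simp
  unfold gAux
  calc (x + 1) * Real.exp x = lam * Real.exp (-x) * Real.exp x := by rw [h2]
    _ = lam * (Real.exp (-x) * Real.exp x) := by ring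
    _ = lam := by rw [h3, mul_one]

theorem unique_nonzero_fixed_point_of_one_lt_lt_lamStar (lam : ℝ) (hlam0 : 1 < lam)
    (hlam1 : lam < (Real.sqrt 2 + 1) * Real.exp (Real.sqrt 2)) :
    ∃ a : ℝ, a ∈ Set.Ioo (0 : ℝ) (Real.sqrt 2) ∧ zeta lam a = a ∧
      ∀ x : ℝ, x ≠ 0 → x ≠ -1 → zeta lam x = x → x = a := by
  set s := Real.sqrt 2 with hs_def
  have hs0 : 0 < s := Real.sqrt_pos.mpr (by norm_num)
  have hcont : ContinuousOn gAux (Set.Icc 0 s) :=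
    ((continuous_id.add continuous_const).mul Real.continuous_exp).continuousOn
  have hg0 : gAux 0 = 1 := by simp [gAux]
  have hgs : gAux s = (s + 1) * Real.exp s := by simp [gAux]
  have hmem : lam ∈ Set.Ioo (gAux 0) (gAux s) := by
    rw [hg0, hgs]; exact ⟨hlam0, by linarith [hlam1]⟩
  obtain ⟨a, ha, hga⟩ := intermediate_value_Ioo hs0.le hcont hmem
  have ha0 : 0 < a := ha.1
  have ha1 : a + 1 ≠ 0 := by linarith
  have hfix : zeta lam a = a := by
    have h2 : lam * Real.exp (-a) = a + 1 := by
      have h3 : Real.exp (-a) * Real.exp a = 1 := by rw [← Real.exp_add]; simp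
      have : (a + 1) * Real.exp a = lam := hga
      calc lam * Real.exp (-a) = (a + 1) * Real.exp a * Real.exp (-a) := by rw [this]
        _ = (a + 1) * (Real.exp (-a) * Real.exp a) := by ring
        _ = a + 1 := by rw [h3, mul_one]
    rw [zeta]
    rw [show lam * a * Real.exp (-a) = a * (lam * Real.exp (-a)) by ring, h2]
    field_simp
  refine ⟨a, ha, hfix, ?_⟩
  intro x hx0 hx1 hfx
  have hgx : gAux x = lam := fixed_iff lam x hx0 hx1 hfx
  have hxgt : -1 ≤ x := by
    by_contra h
    push_neg at h
    have : gAux x < 0 := by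
      have : x + 1 < 0 := by linarith
      have he : 0 < Real.exp x := Real.exp_pos x
      unfold gAux; nlinarith
    linarith
  have hamem : a ∈ Set.Ici (-1 : ℝ) := by simp; linarith
  exact gAux_strictMono.injOn hxgt hamem (by rw [hgx, hga])
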